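/- Set performance difference lemma: for any two policies π_θ and π_β on the n-ary set-RL tree with fixed initial state s_0, bounded set objective f, and γ ∈ (0, 1/n), V^♯_{π_θ}(s_0) − V^♯_{π_β}(s_0) = (1/(1−γn)) · E_{s ~ d^♯_{π_θ}, a_{1:n} ~ π_θ(·|s)}[ A^♯_{π_β}(s, a_{1:n}) ], where A^♯_{π_β}(s, a_{1:n}) = Q^♯_{π_β}(s, a_{1:n}) − V^♯_{π_β}(s). -/

import Mathlib

set_option linter.unusedSectionVars false
set_option maxHeartbeats 1000000



/-- Expected total set reward collected at depth `t` of the `n`-ary rollout tree rooted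
at `s`, with stochastic transitions `T` and policy `π`. -/
noncomputable def sW {S A : Type} [Fintype S] [Fintype A] (n : ℕ)
    (T : S → A → S → ℝ) (π : S → A → ℝ) (f : S → (Fin n → A) → ℝ) : ℕ → S → ℝ
  | 0, s => ∑ v : Fin n → A, (∏ k, π s (v k)) * f s v
  | t + 1, s => ∑ v : Fin n → A, (∏ k, π s (v k)) *
      ∑ i, ∑ s', T s (v i) s' * sW n T π f t s'

/-- Set value function `V^♯_π(s)`. -/
noncomputable def sV {S A : Type} [Fintype S] [Fintype A] (n : ℕ)
    (T : S → A → S → ℝ) (π : S → A → ℝ) (f : S → (Fin n → A) → ℝ) (γ : ℝ) (s : S) : ℝ :=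
  ∑' t : ℕ, γ ^ t * sW n T π f t s

/-- Depth-`t` expected set reward with the root action set fixed to `v`. -/
noncomputable def sU {S A : Type} [Fintype S] [Fintype A] (n : ℕ)
    (T : S → A → S → ℝ) (π : S → A → ℝ) (f : S → (Fin n → A) → ℝ)
    (s : S) (v : Fin n → A) : ℕ → ℝ
  | 0 => f s v
  | t + 1 => ∑ i, ∑ s', T s (v i) s' * sW n T π f t s'

/-- Set `Q`-function `Q^♯_π(s, a_{1:n})`. -/
noncomputable def sQ {S A : Type} [Fintype S] [Fintype A] (n : ℕ)
    (T : S → A → S → ℝ) (π : S → A → ℝ) (f : S → (Fin n → A) → ℝ) (γ : ℝ)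
    (s : S) (v : Fin n → A) : ℝ :=
  ∑' t : ℕ, γ ^ t * sU n T π f s v t

/-- Aggregated occupancy of depth-`t` nodes of the visitation tree of `π` started at `s0`:
`μ t s = Σ_{i<n^t} P(s0 → s at node (t,i), π)`. -/
noncomputable def sMu {S A : Type} [Fintype S] [Fintype A] [DecidableEq S] (n : ℕ)
    (T : S → A → S → ℝ) (π : S → A → ℝ) (s0 : S) : ℕ → S → ℝ
  | 0, s => if s = s0 then 1 else 0
  | t + 1, s' => ∑ s, sMu n T π s0 t s *
      ∑ v : Fin n → A, (∏ k, π s (v k)) * ∑ i, T s (v i) s'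

/-- Normalized discounted state-visitation distribution `d^♯_π`. -/
noncomputable def sD {S A : Type} [Fintype S] [Fintype A] [DecidableEq S] (n : ℕ)
    (T : S → A → S → ℝ) (π : S → A → ℝ) (γ : ℝ) (s0 : S) (s : S) : ℝ :=
  (1 - γ * n) * ∑' t : ℕ, γ ^ t * sMu n T π s0 t s

section aux
variable {S A : Type} [Fintype S] [Fintype A] [DecidableEq S]
variable {n : ℕ} {T : S → A → S → ℝ} {π : S → A → ℝ} {f : S → (Fin n → A) → ℝ} {γ : ℝ}

lemma sum_prod_pi (h1 : ∀ s, ∑ a, π s a = 1) (s : S) :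
    ∑ v : Fin n → A, ∏ k, π s (v k) = 1 := by
  have := (Finset.prod_univ_sum (fun _ : Fin n => (Finset.univ : Finset A))
    (fun _ a => π s a)).symm
  simp only [Fintype.piFinset_univ] at this
  rw [this]
  simp [h1 s]

lemma sW_bounds (hT0 : ∀ s a s', 0 ≤ T s a s') (hT1 : ∀ s a, ∑ s', T s a s' = 1)
    (hπ0 : ∀ s a, 0 ≤ π s a) (hπ1 : ∀ s, ∑ a, π s a = 1)
    (hf0 : ∀ s v, 0 ≤ f s v) (hf1 : ∀ s v, f s v ≤ 1) :
    ∀ t (s : S), 0 ≤ sW n T π f t s ∧ sW n T π f t s ≤ (n : ℝ) ^ t := by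
  intro t
  induction t with
  | zero =>
    intro s
    constructor
    · apply Finset.sum_nonneg
      intro v _
      exact mul_nonneg (Finset.prod_nonneg fun k _ => hπ0 s (v k)) (hf0 s v)
    · calc ∑ v : Fin n → A, (∏ k, π s (v k)) * f s v
          ≤ ∑ v : Fin n → A, (∏ k, π s (v k)) * 1 := by
            apply Finset.sum_le_sum
            intro v _
            exact mul_le_mul_of_nonneg_left (hf1 s v)
              (Finset.prod_nonneg fun k _ => hπ0 s (v k))
      _ = 1 := by simp [sum_prod_pi hπ1 s]
      _ = (n : ℝ) ^ 0 := by simp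
  | succ t ih =>
    intro s
    have hinner : ∀ v : Fin n → A,
        0 ≤ (∑ i, ∑ s', T s (v i) s' * sW n T π f t s') ∧
        (∑ i, ∑ s', T s (v i) s' * sW n T π f t s') ≤ (n : ℝ) ^ (t + 1) := by
      intro v
      constructor
      · apply Finset.sum_nonneg; intro i _
        apply Finset.sum_nonneg; intro s' _
        exact mul_nonneg (hT0 _ _ _) (ih s').1
      · calc ∑ i, ∑ s', T s (v i) s' * sW n T π f t s'
            ≤ ∑ i : Fin n, ∑ s', T s (v i) s' * (n : ℝ) ^ t := by
              apply Finset.sum_le_sum; intro i _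
              apply Finset.sum_le_sum; intro s' _
              exact mul_le_mul_of_nonneg_left (ih s').2 (hT0 _ _ _)
        _ = ∑ i : Fin n, (n : ℝ) ^ t := by
              apply Finset.sum_congr rfl; intro i _
              rw [← Finset.sum_mul, hT1, one_mul]
        _ = (n : ℝ) ^ (t + 1) := by
              simp [Finset.sum_const, pow_succ, mul_comm]
    constructor
    · show 0 ≤ ∑ v : Fin n → A, _
      apply Finset.sum_nonneg; intro v _
      exact mul_nonneg (Finset.prod_nonneg fun k _ => hπ0 s (v k)) (hinner v).1
    · show (∑ v : Fin n → A, (∏ k, π s (v k)) *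
          ∑ i, ∑ s', T s (v i) s' * sW n T π f t s') ≤ _
      calc ∑ v : Fin n → A, (∏ k, π s (v k)) * ∑ i, ∑ s', T s (v i) s' * sW n T π f t s'
          ≤ ∑ v : Fin n → A, (∏ k, π s (v k)) * (n : ℝ) ^ (t + 1) := by
            apply Finset.sum_le_sum; intro v _
            exact mul_le_mul_of_nonneg_left (hinner v).2
              (Finset.prod_nonneg fun k _ => hπ0 s (v k))
      _ = (n : ℝ) ^ (t + 1) := by
            rw [← Finset.sum_mul, sum_prod_pi hπ1 s, one_mul]

lemma summable_pow_mul (hγ0 : 0 ≤ γ) (hγn : γ * n < 1)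
    (g : ℕ → ℝ) (hg0 : ∀ t, 0 ≤ g t) (hg1 : ∀ t, g t ≤ (n : ℝ) ^ t) :
    Summable (fun t => γ ^ t * g t) := by
  apply Summable.of_nonneg_of_le (fun t => mul_nonneg (pow_nonneg hγ0 t) (hg0 t))
    (fun t => ?_) (summable_geometric_of_lt_one (by positivity) hγn)
  calc γ ^ t * g t ≤ γ ^ t * (n : ℝ) ^ t :=
        mul_le_mul_of_nonneg_left (hg1 t) (pow_nonneg hγ0 t)
    _ = (γ * n) ^ t := by rw [mul_pow]

lemma tsum_pow_interchange (hsum : ∀ s : S, Summable (fun t => γ ^ t * sW n T π f t s))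
    (c : S → ℝ) :
    ∑' t : ℕ, γ ^ t * ∑ s', c s' * sW n T π f t s'
      = ∑ s', c s' * sV n T π f γ s' := by
  have h : ∀ t : ℕ, γ ^ t * ∑ s', c s' * sW n T π f t s'
      = ∑ s', c s' * (γ ^ t * sW n T π f t s') := by
    intro t
    rw [Finset.mul_sum]
    apply Finset.sum_congr rfl
    intro s' _; ring
  simp only [h]
  rw [Summable.tsum_finsetSum (fun s' _ => (hsum s').mul_left (c s'))]
  apply Finset.sum_congr rfl
  intro s' _
  rw [tsum_mul_left]; rfl

lemma collapse (g : S → ℝ) (s : S) :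
    ∑ v : Fin n → A, (∏ k, π s (v k)) * ∑ i, ∑ s', T s (v i) s' * g s'
    = ∑ s', (∑ v : Fin n → A, (∏ k, π s (v k)) * ∑ i, T s (v i) s') * g s' := by
  simp only [Finset.mul_sum, Finset.sum_mul]
  conv_rhs => rw [Finset.sum_comm]
  apply Finset.sum_congr rfl; intro v _
  rw [Finset.sum_comm]
  apply Finset.sum_congr rfl; intro s' _
  apply Finset.sum_congr rfl; intro i _
  ring

lemma sV_bellman (hsum : ∀ s : S, Summable (fun t => γ ^ t * sW n T π f t s)) (s : S) :
    sV n T π f γ s = (∑ v : Fin n → A, (∏ k, π s (v k)) * f s v)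
      + γ * ∑ s', (∑ v : Fin n → A, (∏ k, π s (v k)) * ∑ i, T s (v i) s')
          * sV n T π f γ s' := by
  rw [sV, Summable.tsum_eq_zero_add (hsum s)]
  congr 1
  · simp [sW]
  · have h : ∀ t : ℕ, γ ^ (t + 1) * sW n T π f (t + 1) s
        = γ * (γ ^ t * ∑ s', (∑ v : Fin n → A, (∏ k, π s (v k)) * ∑ i, T s (v i) s')
            * sW n T π f t s') := by
      intro t
      rw [show sW n T π f (t + 1) s = ∑ v : Fin n → A, (∏ k, π s (v k)) *
          ∑ i, ∑ s', T s (v i) s' * sW n T π f t s' from rfl, collapse]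
      ring
    simp only [h]
    rw [tsum_mul_left, tsum_pow_interchange hsum]

lemma swap2 (g : S → ℝ) (s : S) (v : Fin n → A) :
    ∑ i, ∑ s', T s (v i) s' * g s' = ∑ s', (∑ i, T s (v i) s') * g s' := by
  rw [Finset.sum_comm]
  apply Finset.sum_congr rfl; intro s' _
  rw [Finset.sum_mul]

lemma sU_bounds (hT0 : ∀ s a s', 0 ≤ T s a s') (hT1 : ∀ s a, ∑ s', T s a s' = 1)
    (hπ0 : ∀ s a, 0 ≤ π s a) (hπ1 : ∀ s, ∑ a, π s a = 1)
    (hf0 : ∀ s v, 0 ≤ f s v) (hf1 : ∀ s v, f s v ≤ 1) (s : S) (v : Fin n → A) :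
    ∀ t, 0 ≤ sU n T π f s v t ∧ sU n T π f s v t ≤ (n : ℝ) ^ t := by
  intro t
  cases t with
  | zero => exact ⟨hf0 s v, by simpa [sU] using hf1 s v⟩
  | succ t =>
    have hW := sW_bounds hT0 hT1 hπ0 hπ1 hf0 hf1 t
    constructor
    · apply Finset.sum_nonneg; intro i _
      apply Finset.sum_nonneg; intro s' _
      exact mul_nonneg (hT0 _ _ _) (hW s').1
    · calc sU n T π f s v (t + 1)
          = ∑ i, ∑ s', T s (v i) s' * sW n T π f t s' := rfl
      _ ≤ ∑ i : Fin n, ∑ s', T s (v i) s' * (n : ℝ) ^ t := by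
            apply Finset.sum_le_sum; intro i _
            apply Finset.sum_le_sum; intro s' _
            exact mul_le_mul_of_nonneg_left (hW s').2 (hT0 _ _ _)
      _ = ∑ i : Fin n, (n : ℝ) ^ t := by
            apply Finset.sum_congr rfl; intro i _
            rw [← Finset.sum_mul, hT1, one_mul]
      _ = (n : ℝ) ^ (t + 1) := by
            simp [Finset.sum_const, pow_succ, mul_comm]

lemma sQ_bellman (hγ0 : 0 ≤ γ) (hγn : γ * n < 1)
    (hT0 : ∀ s a s', 0 ≤ T s a s') (hT1 : ∀ s a, ∑ s', T s a s' = 1)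
    (hπ0 : ∀ s a, 0 ≤ π s a) (hπ1 : ∀ s, ∑ a, π s a = 1)
    (hf0 : ∀ s v, 0 ≤ f s v) (hf1 : ∀ s v, f s v ≤ 1) (s : S) (v : Fin n → A) :
    sQ n T π f γ s v = f s v + γ * ∑ i, ∑ s', T s (v i) s' * sV n T π f γ s' := by
  have hsum : ∀ s : S, Summable (fun t => γ ^ t * sW n T π f t s) := fun s =>
    summable_pow_mul hγ0 hγn _ (fun t => (sW_bounds hT0 hT1 hπ0 hπ1 hf0 hf1 t s).1)
      (fun t => (sW_bounds hT0 hT1 hπ0 hπ1 hf0 hf1 t s).2)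
  have hsU : Summable (fun t => γ ^ t * sU n T π f s v t) :=
    summable_pow_mul hγ0 hγn _ (fun t => (sU_bounds hT0 hT1 hπ0 hπ1 hf0 hf1 s v t).1)
      (fun t => (sU_bounds hT0 hT1 hπ0 hπ1 hf0 hf1 s v t).2)
  rw [sQ, Summable.tsum_eq_zero_add hsU]
  congr 1
  · simp [sU]
  · have h : ∀ t : ℕ, γ ^ (t + 1) * sU n T π f s v (t + 1)
        = γ * (γ ^ t * ∑ s', (∑ i, T s (v i) s') * sW n T π f t s') := by
      intro t
      rw [show sU n T π f s v (t + 1)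
          = ∑ i, ∑ s', T s (v i) s' * sW n T π f t s' from rfl,
          swap2 (fun s' => sW n T π f t s') s v]
      ring
    simp only [h]
    rw [tsum_mul_left, tsum_pow_interchange hsum]
    rw [swap2 (fun s' => sV n T π f γ s') s v]

lemma sMu_bounds (hT0 : ∀ s a s', 0 ≤ T s a s') (hT1 : ∀ s a, ∑ s', T s a s' = 1)
    (hπ0 : ∀ s a, 0 ≤ π s a) (hπ1 : ∀ s, ∑ a, π s a = 1) (s0 : S) :
    ∀ t, (∀ s, 0 ≤ sMu n T π s0 t s) ∧ (∑ s, sMu n T π s0 t s = (n : ℝ) ^ t) := by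
  intro t
  induction t with
  | zero =>
    constructor
    · intro s; simp [sMu]; split <;> norm_num
    · simp [sMu]
  | succ t ih =>
    have hK0 : ∀ s s', 0 ≤ ∑ v : Fin n → A, (∏ k, π s (v k)) * ∑ i, T s (v i) s' := by
      intro s s'
      apply Finset.sum_nonneg; intro v _
      apply mul_nonneg (Finset.prod_nonneg fun k _ => hπ0 s (v k))
      exact Finset.sum_nonneg fun i _ => hT0 _ _ _
    constructor
    · intro s'
      apply Finset.sum_nonneg; intro s _
      exact mul_nonneg (ih.1 s) (hK0 s s')
    · calc ∑ s', sMu n T π s0 (t + 1) s'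
          = ∑ s', ∑ s, sMu n T π s0 t s *
            ∑ v : Fin n → A, (∏ k, π s (v k)) * ∑ i, T s (v i) s' := rfl
      _ = ∑ s, sMu n T π s0 t s *
            ∑ s', ∑ v : Fin n → A, (∏ k, π s (v k)) * ∑ i, T s (v i) s' := by
            rw [Finset.sum_comm]
            apply Finset.sum_congr rfl; intro s _
            rw [Finset.mul_sum]
      _ = ∑ s, sMu n T π s0 t s * (n : ℝ) := by
            apply Finset.sum_congr rfl; intro s _
            congr 1
            rw [Finset.sum_comm]
            calc ∑ v : Fin n → A, ∑ s', (∏ k, π s (v k)) * ∑ i, T s (v i) s'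
                = ∑ v : Fin n → A, (∏ k, π s (v k)) * ∑ i, ∑ s', T s (v i) s' := by
                  apply Finset.sum_congr rfl; intro v _
                  rw [← Finset.mul_sum, Finset.sum_comm]
            _ = ∑ v : Fin n → A, (∏ k, π s (v k)) * (n : ℝ) := by
                  apply Finset.sum_congr rfl; intro v _
                  congr 1
                  calc ∑ i : Fin n, ∑ s', T s (v i) s' = ∑ i : Fin n, (1 : ℝ) := by
                        apply Finset.sum_congr rfl; intro i _; exact hT1 _ _
                  _ = (n : ℝ) := by simp
            _ = (n : ℝ) := by rw [← Finset.sum_mul, sum_prod_pi hπ1 s, one_mul]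
      _ = (n : ℝ) ^ (t + 1) := by
            rw [← Finset.sum_mul, ih.2, pow_succ]

end aux

/-- Set performance difference lemma:
`V^♯_{π_θ}(s0) − V^♯_{π_β}(s0) = (1/(1−γn)) E_{s ~ d^♯_{π_θ}, a_{1:n} ~ π_θ}[A^♯_{π_β}(s,a_{1:n})]`. -/
theorem set_performance_difference {S A : Type} [Fintype S] [Fintype A] [DecidableEq S]
    (n : ℕ) (hn : 1 ≤ n) (γ : ℝ) (h0 : 0 < γ) (h1 : γ < 1 / n)
    (T : S → A → S → ℝ) (hT0 : ∀ s a s', 0 ≤ T s a s') (hT1 : ∀ s a, ∑ s', T s a s' = 1)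
    (πθ πβ : S → A → ℝ)
    (hθ0 : ∀ s a, 0 ≤ πθ s a) (hθ1 : ∀ s, ∑ a, πθ s a = 1)
    (hβ0 : ∀ s a, 0 ≤ πβ s a) (hβ1 : ∀ s, ∑ a, πβ s a = 1)
    (f : S → (Fin n → A) → ℝ) (hf0 : ∀ s v, 0 ≤ f s v) (hf1 : ∀ s v, f s v ≤ 1)
    (s0 : S) :
    sV n T πθ f γ s0 - sV n T πβ f γ s0
      = (1 / (1 - γ * n)) * ∑ s, sD n T πθ γ s0 s *
          ∑ v : Fin n → A, (∏ k, πθ s (v k)) *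
            (sQ n T πβ f γ s v - sV n T πβ f γ s) := by
  -- basic numeric facts
  have hn0 : (0 : ℝ) < n := by exact_mod_cast Nat.pos_of_ne_zero (by omega)
  have hγn : γ * n < 1 := by
    have := mul_lt_mul_of_pos_right h1 hn0
    rwa [one_div, inv_mul_cancel₀ (ne_of_gt hn0)] at this
  have hγn0 : (0 : ℝ) < 1 - γ * n := by linarith
  have hne : (1 : ℝ) - γ * n ≠ 0 := ne_of_gt hγn0
  -- summability of value series
  have hWθ := sW_bounds (π := πθ) hT0 hT1 hθ0 hθ1 hf0 hf1
  have hWβ := sW_bounds (π := πβ) hT0 hT1 hβ0 hβ1 hf0 hf1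
  have hsumθ : ∀ s : S, Summable (fun t => γ ^ t * sW n T πθ f t s) := fun s =>
    summable_pow_mul h0.le hγn _ (fun t => (hWθ t s).1) (fun t => (hWθ t s).2)
  have hsumβ : ∀ s : S, Summable (fun t => γ ^ t * sW n T πβ f t s) := fun s =>
    summable_pow_mul h0.le hγn _ (fun t => (hWβ t s).1) (fun t => (hWβ t s).2)
  -- value bounds
  have hVbd : ∀ (π' : S → A → ℝ), (∀ s a, 0 ≤ π' s a) → (∀ s, ∑ a, π' s a = 1) →
      ∀ s : S, 0 ≤ sV n T π' f γ s ∧ sV n T π' f γ s ≤ (1 - γ * n)⁻¹ := by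
    intro π' hp0 hp1 s
    have hW := sW_bounds (π := π') hT0 hT1 hp0 hp1 hf0 hf1
    have hs : Summable (fun t => γ ^ t * sW n T π' f t s) :=
      summable_pow_mul h0.le hγn _ (fun t => (hW t s).1) (fun t => (hW t s).2)
    constructor
    · exact tsum_nonneg fun t => mul_nonneg (pow_nonneg h0.le t) (hW t s).1
    · rw [sV, ← tsum_geometric_of_lt_one (by positivity : (0:ℝ) ≤ γ * n) hγn]
      apply Summable.tsum_le_tsum _ hs (summable_geometric_of_lt_one (by positivity) hγn)
      intro t
      calc γ ^ t * sW n T π' f t s ≤ γ ^ t * (n : ℝ) ^ t :=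
            mul_le_mul_of_nonneg_left (hW t s).2 (pow_nonneg h0.le t)
      _ = (γ * n) ^ t := by rw [mul_pow]
  have hVθbd := hVbd πθ hθ0 hθ1
  have hVβbd := hVbd πβ hβ0 hβ1
  -- abbreviations
  set Vθ : S → ℝ := sV n T πθ f γ with hVθdef
  set Vβ : S → ℝ := sV n T πβ f γ with hVβdef
  set D : S → ℝ := fun s => Vθ s - Vβ s with hDdef
  set K : S → S → ℝ := fun s s' => ∑ v : Fin n → A, (∏ k, πθ s (v k)) * ∑ i, T s (v i) s'
    with hKdef
  set E : ℕ → ℝ := fun t => ∑ s, sMu n T πθ s0 t s * D s with hEdef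
  -- bound on D
  have hDabs : ∀ s, |D s| ≤ (1 - γ * n)⁻¹ := by
    intro s
    rw [abs_sub_le_iff]
    constructor
    · linarith [(hVθbd s).2, (hVβbd s).1]
    · linarith [(hVβbd s).2, (hVθbd s).1]
  -- μ facts
  have hMu := sMu_bounds (n := n) (π := πθ) hT0 hT1 hθ0 hθ1 s0
  have hMu_le : ∀ t s, sMu n T πθ s0 t s ≤ (n : ℝ) ^ t := by
    intro t s
    rw [← (hMu t).2]
    exact Finset.single_le_sum (fun s' _ => (hMu t).1 s') (Finset.mem_univ s)
  have hsumMu : ∀ s : S, Summable (fun t => γ ^ t * sMu n T πθ s0 t s) := fun s =>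
    summable_pow_mul h0.le hγn _ (fun t => (hMu t).1 s) (fun t => hMu_le t s)
  -- bound and summability of E
  have hEabs : ∀ t, |E t| ≤ (n : ℝ) ^ t * (1 - γ * n)⁻¹ := by
    intro t
    calc |E t| ≤ ∑ s, |sMu n T πθ s0 t s * D s| := Finset.abs_sum_le_sum_abs _ _
    _ ≤ ∑ s, sMu n T πθ s0 t s * (1 - γ * n)⁻¹ := by
        apply Finset.sum_le_sum; intro s _
        rw [abs_mul, abs_of_nonneg ((hMu t).1 s)]
        exact mul_le_mul_of_nonneg_left (hDabs s) ((hMu t).1 s)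
    _ = (n : ℝ) ^ t * (1 - γ * n)⁻¹ := by rw [← Finset.sum_mul, (hMu t).2]
  have hSE : Summable (fun t => γ ^ t * E t) := by
    apply Summable.of_norm_bounded (g := fun t => (γ * n) ^ t * (1 - γ * n)⁻¹)
      ((summable_geometric_of_lt_one (by positivity) hγn).mul_right _)
    intro t
    rw [Real.norm_eq_abs, abs_mul, abs_of_nonneg (pow_nonneg h0.le t)]
    calc γ ^ t * |E t| ≤ γ ^ t * ((n : ℝ) ^ t * (1 - γ * n)⁻¹) :=
          mul_le_mul_of_nonneg_left (hEabs t) (pow_nonneg h0.le t)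
    _ = (γ * n) ^ t * (1 - γ * n)⁻¹ := by rw [mul_pow]; ring
  have hSE' : Summable (fun t => γ ^ (t + 1) * E (t + 1)) :=
    (summable_nat_add_iff (f := fun t => γ ^ t * E t) 1).2 hSE
  -- Step A : the advantage expectation
  have hG : ∀ s, (∑ v : Fin n → A, (∏ k, πθ s (v k)) * (sQ n T πβ f γ s v - Vβ s))
      = D s - γ * ∑ s', K s s' * D s' := by
    intro s
    have e1 : ∑ v : Fin n → A, (∏ k, πθ s (v k)) * (sQ n T πβ f γ s v - Vβ s)
        = (∑ v : Fin n → A, (∏ k, πθ s (v k)) * sQ n T πβ f γ s v) - Vβ s := by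
      simp only [mul_sub, Finset.sum_sub_distrib, ← Finset.sum_mul, sum_prod_pi hθ1 s,
        one_mul]
    have e2 : ∑ v : Fin n → A, (∏ k, πθ s (v k)) * sQ n T πβ f γ s v
        = (∑ v : Fin n → A, (∏ k, πθ s (v k)) * f s v)
          + γ * ∑ s', K s s' * Vβ s' := by
      calc ∑ v : Fin n → A, (∏ k, πθ s (v k)) * sQ n T πβ f γ s v
          = ∑ v : Fin n → A, (∏ k, πθ s (v k)) *
              (f s v + γ * ∑ i, ∑ s', T s (v i) s' * Vβ s') := by
            apply Finset.sum_congr rfl; intro v _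
            rw [sQ_bellman h0.le hγn hT0 hT1 hβ0 hβ1 hf0 hf1 s v]
      _ = (∑ v : Fin n → A, (∏ k, πθ s (v k)) * f s v)
          + γ * ∑ v : Fin n → A, (∏ k, πθ s (v k)) *
              ∑ i, ∑ s', T s (v i) s' * Vβ s' := by
            rw [Finset.mul_sum]
            rw [← Finset.sum_add_distrib]
            apply Finset.sum_congr rfl; intro v _; ring
      _ = _ := by rw [collapse (π := πθ) Vβ s]
    have e3 : Vθ s = (∑ v : Fin n → A, (∏ k, πθ s (v k)) * f s v)
        + γ * ∑ s', K s s' * Vθ s' := sV_bellman hsumθ s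
    have e4 : ∑ s', K s s' * D s'
        = (∑ s', K s s' * Vθ s') - ∑ s', K s s' * Vβ s' := by
      rw [← Finset.sum_sub_distrib]
      apply Finset.sum_congr rfl; intro s' _
      simp [hDdef]; ring
    rw [e1, e2, e4]
    simp only [hDdef]
    linarith [e3]
  -- Step B : one-step occupancy recursion
  have hEstep : ∀ t, ∑ s, sMu n T πθ s0 t s *
      (∑ v : Fin n → A, (∏ k, πθ s (v k)) * (sQ n T πβ f γ s v - Vβ s))
      = E t - γ * E (t + 1) := by
    intro t
    have hE1 : E (t + 1) = ∑ s, sMu n T πθ s0 t s * ∑ s', K s s' * D s' := by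
      calc E (t + 1) = ∑ s', (∑ s, sMu n T πθ s0 t s * K s s') * D s' := rfl
      _ = ∑ s', ∑ s, sMu n T πθ s0 t s * (K s s' * D s') := by
            apply Finset.sum_congr rfl; intro s' _
            rw [Finset.sum_mul]
            apply Finset.sum_congr rfl; intro s _; ring
      _ = ∑ s, sMu n T πθ s0 t s * ∑ s', K s s' * D s' := by
            rw [Finset.sum_comm]
            apply Finset.sum_congr rfl; intro s _
            rw [Finset.mul_sum]
    calc ∑ s, sMu n T πθ s0 t s *
        (∑ v : Fin n → A, (∏ k, πθ s (v k)) * (sQ n T πβ f γ s v - Vβ s))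
        = ∑ s, sMu n T πθ s0 t s * (D s - γ * ∑ s', K s s' * D s') := by
          apply Finset.sum_congr rfl; intro s _
          rw [hG s]
    _ = (∑ s, sMu n T πθ s0 t s * D s)
        - γ * ∑ s, sMu n T πθ s0 t s * ∑ s', K s s' * D s' := by
          rw [Finset.mul_sum, ← Finset.sum_sub_distrib]
          apply Finset.sum_congr rfl; intro s _; ring
    _ = E t - γ * E (t + 1) := by rw [hE1]
  -- assemble the right-hand side
  have key : ∑ s, sD n T πθ γ s0 s *
      (∑ v : Fin n → A, (∏ k, πθ s (v k)) * (sQ n T πβ f γ s v - Vβ s))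
      = (1 - γ * n) * D s0 := by
    have step1 : ∀ s, sD n T πθ γ s0 s *
        (∑ v : Fin n → A, (∏ k, πθ s (v k)) * (sQ n T πβ f γ s v - Vβ s))
        = (1 - γ * n) * ∑' t : ℕ, γ ^ t * sMu n T πθ s0 t s *
            (∑ v : Fin n → A, (∏ k, πθ s (v k)) * (sQ n T πβ f γ s v - Vβ s)) := by
      intro s
      rw [sD, mul_assoc]
      congr 1
      rw [← tsum_mul_right]
    calc ∑ s, sD n T πθ γ s0 s *
        (∑ v : Fin n → A, (∏ k, πθ s (v k)) * (sQ n T πβ f γ s v - Vβ s))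
        = (1 - γ * n) * ∑ s, ∑' t : ℕ, γ ^ t * sMu n T πθ s0 t s *
            (∑ v : Fin n → A, (∏ k, πθ s (v k)) * (sQ n T πβ f γ s v - Vβ s)) := by
          rw [Finset.mul_sum]
          apply Finset.sum_congr rfl; intro s _
          exact step1 s
    _ = (1 - γ * n) * ∑' t : ℕ, ∑ s, γ ^ t * sMu n T πθ s0 t s *
            (∑ v : Fin n → A, (∏ k, πθ s (v k)) * (sQ n T πβ f γ s v - Vβ s)) := by
          congr 1
          rw [Summable.tsum_finsetSum]
          intro s _
          have := (hsumMu s).mul_right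
            (∑ v : Fin n → A, (∏ k, πθ s (v k)) * (sQ n T πβ f γ s v - Vβ s))
          simpa [mul_assoc] using this
    _ = (1 - γ * n) * ∑' t : ℕ, (γ ^ t * E t - γ ^ (t + 1) * E (t + 1)) := by
          congr 1
          apply tsum_congr
          intro t
          calc ∑ s, γ ^ t * sMu n T πθ s0 t s *
              (∑ v : Fin n → A, (∏ k, πθ s (v k)) * (sQ n T πβ f γ s v - Vβ s))
              = γ ^ t * ∑ s, sMu n T πθ s0 t s *
                (∑ v : Fin n → A, (∏ k, πθ s (v k)) * (sQ n T πβ f γ s v - Vβ s)) := by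
                rw [Finset.mul_sum]
                apply Finset.sum_congr rfl; intro s _; ring
          _ = γ ^ t * (E t - γ * E (t + 1)) := by rw [hEstep t]
          _ = γ ^ t * E t - γ ^ (t + 1) * E (t + 1) := by ring
    _ = (1 - γ * n) * D s0 := by
          rw [Summable.tsum_sub hSE hSE']
          rw [Summable.tsum_eq_zero_add hSE]
          have hE0 : E 0 = D s0 := by
            simp [hEdef, sMu]
          simp [hE0]
  -- finish
  have : sV n T πθ f γ s0 - sV n T πβ f γ s0 = D s0 := rfl
  rw [this, key]
  field_simp
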